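/- Let p : ℕ → [1,∞] and let (n_k)_{k≥1} be a strictly increasing sequence of positive integers. Define q : ℕ → [1,∞] by q(k) = p(n_k), and for a bounded sequence y = (y_k) let φ(y) be the sequence with φ(y)_{n₁} = y₁, φ(y)_{n_k + 1} = y_{k+1} for k ≥ 1, and all other coordinates zero. Then Φ_p(φ(y)) = Φ_q(y) for every bounded sequence y; i.e., the coordinate subspace of ℓ^{p(·)} supported on {n₁, n₁+1, n₂+1, n₃+1, …} is isometric to ℓ^{q(·)}. -/
import Mathlib


open scoped ENNReal

/-- `t ⊞_p s`: for `p < ∞`, `(t^p + s^p)^(1/p)`; for `p = ∞`, `max t s`. -/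
noncomputable def boxPlus (p : ℝ≥0∞) (t s : ℝ) : ℝ :=
  if p = ∞ then max t s else (t ^ p.toReal + s ^ p.toReal) ^ (1 / p.toReal)

/-- The recursively defined seminorms `|||x|||_(k)` (0-indexed). -/
noncomputable def seqNorm (p : ℕ → ℝ≥0∞) (x : ℕ → ℝ) : ℕ → ℝ
  | 0 => boxPlus (p 0) |x 0| |x 1|
  | k + 1 => boxPlus (p (k + 1)) (seqNorm p x k) |x (k + 2)|

/-- `Φ_p(x) = lim_k |||x|||_(k)`, as the supremum of the nondecreasing sequence. -/
noncomputable def Phi (p : ℕ → ℝ≥0∞) (x : ℕ → ℝ) : ℝ≥0∞ :=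
  ⨆ k, ENNReal.ofReal (seqNorm p x k)

/-- `x` is a bounded real sequence, i.e. `x ∈ ℓ^∞`. -/
def IsBddSeq (x : ℕ → ℝ) : Prop := ∃ M : ℝ, ∀ n, |x n| ≤ M

/-- Membership in the variable exponent space `ℓ^{p(·)}`. -/
def MemVLp (p : ℕ → ℝ≥0∞) (x : ℕ → ℝ) : Prop := IsBddSeq x ∧ Phi p x < ⊤

open scoped Classical in
/-- The placement map: `(place n y) (n 0) = y 0`, `(place n y) (n k + 1) = y (k+1)`,
and all other coordinates vanish. -/
noncomputable def place (n : ℕ → ℕ) (y : ℕ → ℝ) : ℕ → ℝ := fun j =>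
  if j = n 0 then y 0
  else if h : ∃ k, j = n k + 1 then y (h.choose + 1)
  else 0

lemma hp_toReal_pos {p : ℝ≥0∞} (hp : 1 ≤ p) (h : p ≠ ∞) : 0 < p.toReal :=
  ENNReal.toReal_pos (zero_lt_one.trans_le hp).ne' h

lemma boxPlus_nonneg {p : ℝ≥0∞} {t s : ℝ} (ht : 0 ≤ t) (hs : 0 ≤ s) :
    0 ≤ boxPlus p t s := by
  unfold boxPlus
  split_ifs
  · exact le_max_of_le_left ht
  · exact Real.rpow_nonneg (add_nonneg (Real.rpow_nonneg ht _) (Real.rpow_nonneg hs _)) _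

lemma rpow_self_inv {t a : ℝ} (ht : 0 ≤ t) (ha : a ≠ 0) : (t ^ a) ^ (1/a) = t := by
  rw [← Real.rpow_mul ht, mul_one_div, div_self ha, Real.rpow_one]

lemma le_boxPlus {p : ℝ≥0∞} {t s : ℝ} (hp : 1 ≤ p) (ht : 0 ≤ t) (hs : 0 ≤ s) :
    t ≤ boxPlus p t s := by
  unfold boxPlus
  split_ifs with h
  · exact le_max_left _ _
  · have ha := hp_toReal_pos hp h
    calc t = (t ^ p.toReal) ^ (1/p.toReal) := (rpow_self_inv ht ha.ne').symm
    _ ≤ _ := Real.rpow_le_rpow (Real.rpow_nonneg ht _)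
        (le_add_of_nonneg_right (Real.rpow_nonneg hs _)) (by positivity)

lemma boxPlus_zero_right {p : ℝ≥0∞} {t : ℝ} (hp : 1 ≤ p) (ht : 0 ≤ t) :
    boxPlus p t 0 = t := by
  unfold boxPlus
  split_ifs with h
  · exact max_eq_left ht
  · have ha := hp_toReal_pos hp h
    rw [Real.zero_rpow ha.ne', add_zero, rpow_self_inv ht ha.ne']

lemma boxPlus_zero_left {p : ℝ≥0∞} {s : ℝ} (hp : 1 ≤ p) (hs : 0 ≤ s) :
    boxPlus p 0 s = s := by
  unfold boxPlus
  split_ifs with h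
  · exact max_eq_right hs
  · have ha := hp_toReal_pos hp h
    rw [Real.zero_rpow ha.ne', zero_add, rpow_self_inv hs ha.ne']

lemma seqNorm_nonneg (p : ℕ → ℝ≥0∞) (x : ℕ → ℝ) : ∀ k, 0 ≤ seqNorm p x k
  | 0 => boxPlus_nonneg (abs_nonneg _) (abs_nonneg _)
  | k + 1 => boxPlus_nonneg (seqNorm_nonneg p x k) (abs_nonneg _)

lemma place_apply_n0 (n : ℕ → ℕ) (y : ℕ → ℝ) : place n y (n 0) = y 0 := by
  unfold place; simp

lemma place_apply_succ (n : ℕ → ℕ) (hn : StrictMono n) (y : ℕ → ℝ) (k : ℕ) :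
    place n y (n k + 1) = y (k + 1) := by
  unfold place
  have h0 : n k + 1 ≠ n 0 := by
    have := hn.monotone (Nat.zero_le k); omega
  rw [if_neg h0]
  have hex : ∃ j, n k + 1 = n j + 1 := ⟨k, rfl⟩
  rw [dif_pos hex]
  have : hex.choose = k := hn.injective (by have := hex.choose_spec; omega)
  rw [this]

lemma place_eq_zero (n : ℕ → ℕ) (y : ℕ → ℝ) {j : ℕ} (h0 : j ≠ n 0)
    (h1 : ∀ k, j ≠ n k + 1) : place n y j = 0 := by
  unfold place
  rw [if_neg h0, dif_neg (not_exists.mpr h1)]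

lemma L0 (p : ℕ → ℝ≥0∞) (hp : ∀ m, 1 ≤ p m) (n : ℕ → ℕ) (hn : StrictMono n)
    (y : ℕ → ℝ) : ∀ j, j + 1 < n 0 → seqNorm p (place n y) j = 0 := by
  intro j
  induction j with
  | zero =>
    intro h
    have h0 : place n y 0 = 0 := place_eq_zero n y (by omega) (fun k => by omega)
    have h1 : place n y 1 = 0 := place_eq_zero n y (by omega)
      (fun k => by have := hn.monotone (Nat.zero_le k); omega)
    show boxPlus (p 0) |place n y 0| |place n y 1| = 0
    rw [h0, h1, abs_zero, boxPlus_zero_right (hp 0) le_rfl]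
  | succ j ih =>
    intro h
    have hz : place n y (j + 2) = 0 := place_eq_zero n y (by omega)
      (fun k => by have := hn.monotone (Nat.zero_le k); omega)
    show boxPlus (p (j+1)) (seqNorm p (place n y) j) |place n y (j+2)| = 0
    rw [ih (by omega), hz, abs_zero, boxPlus_zero_right (hp _) le_rfl]

lemma L1 (p : ℕ → ℝ≥0∞) (hp : ∀ m, 1 ≤ p m) (n : ℕ → ℕ) (hn : StrictMono n)
    (y : ℕ → ℝ) : ∀ m, n 0 = m + 1 → seqNorm p (place n y) m = |y 0| := by
  intro m
  cases m with
  | zero =>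
    intro e
    have h0 : place n y 0 = 0 := place_eq_zero n y (by omega) (fun k => by omega)
    have h1 : place n y 1 = y 0 := by
      rw [show (1:ℕ) = n 0 by omega, place_apply_n0]
    show boxPlus (p 0) |place n y 0| |place n y 1| = |y 0|
    rw [h0, h1, abs_zero, boxPlus_zero_left (hp 0) (abs_nonneg _)]
  | succ m =>
    intro e
    have hz : seqNorm p (place n y) m = 0 := L0 p hp n hn y m (by omega)
    have h1 : place n y (m + 2) = y 0 := by
      rw [show m + 2 = n 0 by omega, place_apply_n0]
    show boxPlus (p (m+1)) (seqNorm p (place n y) m) |place n y (m+2)| = |y 0|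
    rw [hz, h1, boxPlus_zero_left (hp _) (abs_nonneg _)]

lemma L2 (p : ℕ → ℝ≥0∞) (hp : ∀ m, 1 ≤ p m) (n : ℕ → ℕ) (hn : StrictMono n)
    (y : ℕ → ℝ) : ∀ j m, n m ≤ j → j < n (m + 1) →
    seqNorm p (place n y) j = seqNorm (fun k => p (n k)) y m := by
  intro j
  induction j using Nat.strong_induction_on with
  | _ j ih =>
    intro m hmj hj
    rcases eq_or_lt_of_le hmj with he | hlt
    · -- j = n m
      cases m with
      | zero =>
        cases hn0 : n 0 with
        | zero =>
          have hj0 : j = 0 := by omega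
          subst hj0
          have h0 := place_apply_n0 n y
          rw [hn0] at h0
          have h1 := place_apply_succ n hn y 0
          rw [hn0] at h1
          show boxPlus (p 0) |place n y 0| |place n y 1| = boxPlus (p (n 0)) |y 0| |y 1|
          rw [h0, h1, hn0]
        | succ m' =>
          have hj0 : j = m' + 1 := by omega
          subst hj0
          have hz : seqNorm p (place n y) m' = |y 0| := L1 p hp n hn y m' hn0
          have h1 : place n y (m' + 2) = y 1 := by
            rw [show m' + 2 = n 0 + 1 by omega, place_apply_succ n hn y 0]
          show boxPlus (p (m'+1)) (seqNorm p (place n y) m') |place n y (m'+2)|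
              = boxPlus (p (n 0)) |y 0| |y 1|
          rw [hz, h1, show m' + 1 = n 0 by omega]
      | succ m' =>
        have he2 : n (m' + 1) = j := he
        have hs1 : n m' < n (m' + 1) := hn (Nat.lt_succ_self m')
        have h1 : 1 ≤ j := by omega
        obtain ⟨j', rfl⟩ : ∃ j', j = j' + 1 := ⟨j - 1, by omega⟩
        have hprev : seqNorm p (place n y) j' = seqNorm (fun k => p (n k)) y m' :=
          ih j' (Nat.lt_succ_self j') m' (by omega) (by omega)
        have hx : place n y (j' + 2) = y (m' + 2) := by
          rw [show j' + 2 = n (m' + 1) + 1 by omega, place_apply_succ n hn y (m' + 1)]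
        show boxPlus (p (j'+1)) (seqNorm p (place n y) j') |place n y (j'+2)|
            = boxPlus (p (n (m'+1))) (seqNorm (fun k => p (n k)) y m') |y (m'+2)|
        rw [hprev, hx, show j' + 1 = n (m' + 1) by omega]
      -- n m < j
    · obtain ⟨j', rfl⟩ : ∃ j', j = j' + 1 := ⟨j - 1, by omega⟩
      have hprev : seqNorm p (place n y) j' = seqNorm (fun k => p (n k)) y m :=
        ih j' (Nat.lt_succ_self j') m (by omega) (by omega)
      have hj2 : j' + 1 < n (m + 1) := hj
      have hz : place n y (j' + 2) = 0 := by
        apply place_eq_zero n y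
        · have := hn.monotone (Nat.zero_le m); omega
        · intro k hk
          rcases le_or_gt k m with h | h
          · have := hn.monotone h; omega
          · have h2 : n (m + 1) ≤ n k := hn.monotone (by omega : m + 1 ≤ k); omega
      show boxPlus (p (j'+1)) (seqNorm p (place n y) j') |place n y (j'+2)|
          = seqNorm (fun k => p (n k)) y m
      rw [hprev, hz, abs_zero, boxPlus_zero_right (hp _) (seqNorm_nonneg _ _ _)]

/-- The coordinate subspace of `ℓ^{p(·)}` supported on
`{n 0, n 0 + 1, n 1 + 1, n 2 + 1, …}` is isometric to `ℓ^{q(·)}`,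
where `q k = p (n k)`. -/
theorem coord_subspace_isometric (p : ℕ → ℝ≥0∞) (hp : ∀ m, 1 ≤ p m)
    (n : ℕ → ℕ) (hn : StrictMono n) (y : ℕ → ℝ) (hy : IsBddSeq y) :
    Phi p (place n y) = Phi (fun k => p (n k)) y := by
  have key : ∀ m, seqNorm p (place n y) (n m) = seqNorm (fun k => p (n k)) y m :=
    fun m => L2 p hp n hn y (n m) m le_rfl (hn (Nat.lt_succ_self m))
  have hle : ∀ k, k ≤ n k := fun k => hn.le_apply
  unfold Phi
  apply le_antisymm
  · apply iSup_le; intro j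
    rcases lt_trichotomy (j + 1) (n 0) with h | h | h
    · rw [L0 p hp n hn y j h]; simp
    · rw [L1 p hp n hn y j h.symm]
      refine le_trans ?_ (le_iSup _ 0)
      apply ENNReal.ofReal_le_ofReal
      show |y 0| ≤ boxPlus (p (n 0)) |y 0| |y 1|
      exact le_boxPlus (hp (n 0)) (abs_nonneg _) (abs_nonneg _)
    · have hex : ∃ k, j < n k := ⟨j + 1, lt_of_lt_of_le (Nat.lt_succ_self j) (hle (j+1))⟩
      have hspec := Nat.find_spec hex
      have hK1 : 1 ≤ Nat.find hex := by
        rcases Nat.eq_zero_or_pos (Nat.find hex) with h0 | h0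
        · exfalso; rw [h0] at hspec; omega
        · exact h0
      obtain ⟨m, hKm⟩ : ∃ m, Nat.find hex = m + 1 := ⟨Nat.find hex - 1, by omega⟩
      have hmin : ¬ j < n m := Nat.find_min hex (by omega)
      rw [hKm] at hspec
      rw [L2 p hp n hn y j m (by omega) hspec]
      exact le_iSup (fun k => ENNReal.ofReal (seqNorm (fun k => p (n k)) y k)) m
  · apply iSup_le; intro m
    rw [← key m]
    exact le_iSup (fun j => ENNReal.ofReal (seqNorm p (place n y) j)) (n m)
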